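/- For parameters μ ∈ [−π, π), γ ∈ [0, 1), ρ ∈ [0, 1), λ ∈ [−π, π) satisfying (ρ cos λ − γ)² + (ρ sin λ)² ≤ (1 − γ)², the Kato–Jones function g_KJ(·; μ, γ, λ, ρ) is a probability density on [−π, π): g_KJ(θ; μ, γ, λ, ρ) ≥ 0 for all θ ∈ [−π, π), and ∫_{−π}^{π} g_KJ(θ; μ, γ, λ, ρ) dθ = 1. -/

import Mathlib

/-- The Kato–Jones density. -/
noncomputable def gKJ (μ γ lam ρ θ : ℝ) : ℝ :=
  (1 / (2 * Real.pi)) *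
    (1 + 2 * γ * (Real.cos (θ - μ) - ρ * Real.cos lam) /
      (1 + ρ ^ 2 - 2 * ρ * Real.cos (θ - μ - lam)))

lemma kj_denom_pos {ρ : ℝ} (h0 : 0 ≤ ρ) (h1 : ρ < 1) (x : ℝ) :
    0 < 1 + ρ ^ 2 - 2 * ρ * Real.cos x := by
  nlinarith [Real.neg_one_le_cos x, Real.cos_le_one x]

lemma kj_continuous (μ γ lam ρ : ℝ) (h0 : 0 ≤ ρ) (h1 : ρ < 1) :
    Continuous (gKJ μ γ lam ρ) := by
  unfold gKJ
  refine continuous_const.mul (continuous_const.add ?_)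
  refine Continuous.div (by continuity) (by continuity) ?_
  intro x
  exact (kj_denom_pos h0 h1 _).ne'

lemma kj_hasDerivAt_G (μ γ lam ρ : ℝ) (h0 : 0 < ρ) (h1 : ρ < 1) (θ : ℝ) :
    HasDerivAt (fun t => t / (2 * Real.pi) +
      γ / Real.pi * (Real.cos lam / ρ *
        Real.arctan (ρ * Real.sin (t - μ - lam) / (1 - ρ * Real.cos (t - μ - lam))) -
        Real.sin lam / (2 * ρ) *
        Real.log (1 + ρ ^ 2 - 2 * ρ * Real.cos (t - μ - lam))))
      (gKJ μ γ lam ρ θ) θ := by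
  have hπ := Real.pi_pos
  have hid : HasDerivAt (fun t : ℝ => t - μ - lam) 1 θ := by
    simpa using ((hasDerivAt_id θ).sub_const μ).sub_const lam
  set φ := θ - μ - lam with hφ
  have hsin : HasDerivAt (fun t : ℝ => Real.sin (t - μ - lam)) (Real.cos φ) θ := by
    have := (Real.hasDerivAt_sin φ).comp θ hid
    rw [mul_one] at this
    exact this
  have hcos : HasDerivAt (fun t : ℝ => Real.cos (t - μ - lam)) (-Real.sin φ) θ := by
    have := (Real.hasDerivAt_cos φ).comp θ hid
    rw [mul_one] at this
    exact this
  have hden_pos : (0:ℝ) < 1 - ρ * Real.cos φ := by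
    nlinarith [Real.cos_le_one φ]
  have hnum : HasDerivAt (fun t : ℝ => ρ * Real.sin (t - μ - lam)) (ρ * Real.cos φ) θ :=
    hsin.const_mul ρ
  have hden : HasDerivAt (fun t : ℝ => 1 - ρ * Real.cos (t - μ - lam)) (ρ * Real.sin φ) θ := by
    have := (hcos.const_mul ρ).const_sub 1
    simpa using this
  have hquot : HasDerivAt (fun t : ℝ => ρ * Real.sin (t - μ - lam) / (1 - ρ * Real.cos (t - μ - lam)))
      ((ρ * Real.cos φ * (1 - ρ * Real.cos φ) - ρ * Real.sin φ * (ρ * Real.sin φ)) /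
        (1 - ρ * Real.cos φ) ^ 2) θ := hnum.div hden hden_pos.ne'
  have harctan : HasDerivAt (fun t : ℝ =>
      Real.arctan (ρ * Real.sin (t - μ - lam) / (1 - ρ * Real.cos (t - μ - lam))))
      ((1 / (1 + (ρ * Real.sin φ / (1 - ρ * Real.cos φ)) ^ 2)) *
        ((ρ * Real.cos φ * (1 - ρ * Real.cos φ) - ρ * Real.sin φ * (ρ * Real.sin φ)) /
          (1 - ρ * Real.cos φ) ^ 2)) θ :=
    (Real.hasDerivAt_arctan _).comp θ hquot
  have hDpos : (0:ℝ) < 1 + ρ ^ 2 - 2 * ρ * Real.cos φ := kj_denom_pos h0.le h1 φ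
  have hlogarg : HasDerivAt (fun t : ℝ => 1 + ρ ^ 2 - 2 * ρ * Real.cos (t - μ - lam))
      (2 * ρ * Real.sin φ) θ := by
    have := (hcos.const_mul (2 * ρ)).const_sub (1 + ρ ^ 2)
    simpa using this
  have hlog : HasDerivAt (fun t : ℝ =>
      Real.log (1 + ρ ^ 2 - 2 * ρ * Real.cos (t - μ - lam)))
      ((2 * ρ * Real.sin φ) / (1 + ρ ^ 2 - 2 * ρ * Real.cos φ)) θ :=
    hlogarg.log hDpos.ne'
  have hG := ((hasDerivAt_id θ).div_const (2 * Real.pi)).add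
      (((harctan.const_mul (Real.cos lam / ρ)).sub
        (hlog.const_mul (Real.sin lam / (2 * ρ)))).const_mul (γ / Real.pi))
  refine hG.congr_deriv ?_
  symm
  unfold gKJ
  have hpyth := Real.sin_sq_add_cos_sq φ
  have hN : ρ * Real.cos φ * (1 - ρ * Real.cos φ) - ρ * Real.sin φ * (ρ * Real.sin φ)
      = ρ * (Real.cos φ - ρ) := by linear_combination (-ρ^2) * hpyth
  have e1 : 1 + (ρ * Real.sin φ / (1 - ρ * Real.cos φ)) ^ 2
      = (1 + ρ ^ 2 - 2 * ρ * Real.cos φ) / (1 - ρ * Real.cos φ) ^ 2 := by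
    field_simp
    linear_combination (ρ^2) * hpyth
  have e2 : (1 / (1 + (ρ * Real.sin φ / (1 - ρ * Real.cos φ)) ^ 2)) *
        ((ρ * Real.cos φ * (1 - ρ * Real.cos φ) - ρ * Real.sin φ * (ρ * Real.sin φ)) /
          (1 - ρ * Real.cos φ) ^ 2)
      = ρ * (Real.cos φ - ρ) / (1 + ρ ^ 2 - 2 * ρ * Real.cos φ) := by
    rw [hN, e1, one_div_div]
    field_simp
  have hcosθμ : Real.cos (θ - μ) = Real.cos φ * Real.cos lam - Real.sin φ * Real.sin lam := by
    have h : θ - μ = φ + lam := by rw [hφ]; ring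
    rw [h, Real.cos_add]
  rw [hcosθμ]
  simp only [e2]
  field_simp
  ring

lemma kj_numer_nonneg (γ a b c s D E lam ρ : ℝ)
    (hγ0 : 0 ≤ γ) (hγ1 : γ < 1)
    (hcon : (a - γ) ^ 2 + b ^ 2 ≤ (1 - γ) ^ 2)
    (hpyth : s ^ 2 + c ^ 2 = 1)
    (hpyth2 : Real.sin lam ^ 2 + Real.cos lam ^ 2 = 1)
    (hD : Real.cos D = c * Real.cos lam + s * Real.sin lam)
    (ha : a = ρ * Real.cos lam := by rfl) (hb : b = ρ * Real.sin lam := by rfl)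
    (hc : c = Real.cos E := by rfl) (hs : s = Real.sin E := by rfl) :
    0 ≤ 1 + ρ ^ 2 - 2 * ρ * Real.cos D + 2 * γ * (c - a) := by
  rw [hD]
  have hab : a ^ 2 + b ^ 2 = ρ ^ 2 := by rw [ha, hb]; nlinarith [hpyth2]
  have hr0 : 0 ≤ Real.sqrt ((a - γ) ^ 2 + b ^ 2) := Real.sqrt_nonneg _
  have hr2 : Real.sqrt ((a - γ) ^ 2 + b ^ 2) ^ 2 = (a - γ) ^ 2 + b ^ 2 :=
    Real.sq_sqrt (by positivity)
  have hrle : Real.sqrt ((a - γ) ^ 2 + b ^ 2) ≤ 1 - γ := by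
    have h1 : Real.sqrt ((a - γ) ^ 2 + b ^ 2) ≤ Real.sqrt ((1 - γ) ^ 2) :=
      Real.sqrt_le_sqrt hcon
    rwa [Real.sqrt_sq (by linarith)] at h1
  set r := Real.sqrt ((a - γ) ^ 2 + b ^ 2) with hr
  have hCS : ((γ - a) * c - b * s) ^ 2 ≤ r ^ 2 := by
    nlinarith [sq_nonneg ((γ - a) * s + b * c), hpyth, hr2]
  have ht : -r ≤ (γ - a) * c - b * s := by nlinarith [hCS, hr0]
  have hρc : ρ * (c * Real.cos lam) = a * c := by rw [ha]; ring
  have hρs : ρ * (s * Real.sin lam) = b * s := by rw [hb]; ring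
  nlinarith [ht, hr2, hab, hrle, hr0, sq_nonneg (1 - r - γ)]

/-- Under the Kato–Jones parameter constraint, `gKJ` is a probability density on `[-π, π)`:
it is nonnegative there, and it integrates to one. -/
theorem kato_jones_is_density
    (μ γ lam ρ : ℝ)
    (hμ : μ ∈ Set.Ico (-Real.pi) Real.pi)
    (hγ : γ ∈ Set.Ico (0 : ℝ) 1)
    (hρ : ρ ∈ Set.Ico (0 : ℝ) 1)
    (hlam : lam ∈ Set.Ico (-Real.pi) Real.pi)
    (hconstraint : (ρ * Real.cos lam - γ) ^ 2 + (ρ * Real.sin lam) ^ 2 ≤ (1 - γ) ^ 2) :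
    (∀ θ ∈ Set.Ico (-Real.pi) Real.pi, 0 ≤ gKJ μ γ lam ρ θ) ∧
    (∫ θ in (-Real.pi)..Real.pi, gKJ μ γ lam ρ θ) = 1 := by
  have hπ := Real.pi_pos
  constructor
  · -- nonnegativity
    intro θ _
    unfold gKJ
    have hDpos : 0 < 1 + ρ ^ 2 - 2 * ρ * Real.cos (θ - μ - lam) :=
      kj_denom_pos hρ.1 hρ.2 _
    have hE : 0 ≤ 1 + ρ ^ 2 - 2 * ρ * Real.cos (θ - μ - lam)
        + 2 * γ * (Real.cos (θ - μ) - ρ * Real.cos lam) :=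
      kj_numer_nonneg γ (ρ * Real.cos lam) (ρ * Real.sin lam)
        (Real.cos (θ - μ)) (Real.sin (θ - μ)) (θ - μ - lam) (θ - μ) lam ρ
        hγ.1 hγ.2 hconstraint (Real.sin_sq_add_cos_sq _) (Real.sin_sq_add_cos_sq lam)
        (by rw [show θ - μ - lam = (θ - μ) - lam by ring, Real.cos_sub])
    have heq : 1 + 2 * γ * (Real.cos (θ - μ) - ρ * Real.cos lam) /
          (1 + ρ ^ 2 - 2 * ρ * Real.cos (θ - μ - lam))
        = (1 + ρ ^ 2 - 2 * ρ * Real.cos (θ - μ - lam)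
            + 2 * γ * (Real.cos (θ - μ) - ρ * Real.cos lam)) /
          (1 + ρ ^ 2 - 2 * ρ * Real.cos (θ - μ - lam)) := by
      field_simp
    rw [heq]
    have h2π : (0:ℝ) < 1 / (2 * Real.pi) := by positivity
    exact mul_nonneg h2π.le (div_nonneg hE hDpos.le)
  · -- integral equals one
    have hint : IntervalIntegrable (gKJ μ γ lam ρ) MeasureTheory.volume (-Real.pi) Real.pi :=
      (kj_continuous μ γ lam ρ hρ.1 hρ.2).intervalIntegrable _ _
    rcases eq_or_lt_of_le hρ.1 with h0 | h0
    · -- ρ = 0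
      subst h0
      have hF : ∀ t ∈ Set.uIcc (-Real.pi) Real.pi,
          HasDerivAt (fun t => t / (2 * Real.pi) + γ / Real.pi * Real.sin (t - μ))
            (gKJ μ γ lam 0 t) t := by
        intro t _
        have hval : gKJ μ γ lam 0 t = 1 / (2 * Real.pi) + γ / Real.pi * Real.cos (t - μ) := by
          unfold gKJ
          norm_num
          field_simp
        rw [hval]
        have hid : HasDerivAt (fun t : ℝ => t - μ) 1 t := by
          simpa using (hasDerivAt_id t).sub_const μ
        have hsin : HasDerivAt (fun t : ℝ => Real.sin (t - μ)) (Real.cos (t - μ)) t := by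
          have := (Real.hasDerivAt_sin (t - μ)).comp t hid
          rw [mul_one] at this
          exact this
        have := ((hasDerivAt_id t).div_const (2 * Real.pi)).add
          (hsin.const_mul (γ / Real.pi))
        exact this
      rw [intervalIntegral.integral_eq_sub_of_hasDerivAt hF hint]
      have h : Real.pi - μ = (-Real.pi - μ) + 2 * Real.pi := by ring
      rw [h, Real.sin_add_two_pi]
      ring_nf
      field_simp
    · -- ρ > 0
      have hF : ∀ t ∈ Set.uIcc (-Real.pi) Real.pi,
          HasDerivAt (fun t => t / (2 * Real.pi) +
            γ / Real.pi * (Real.cos lam / ρ *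
              Real.arctan (ρ * Real.sin (t - μ - lam) / (1 - ρ * Real.cos (t - μ - lam))) -
              Real.sin lam / (2 * ρ) *
              Real.log (1 + ρ ^ 2 - 2 * ρ * Real.cos (t - μ - lam))))
            (gKJ μ γ lam ρ t) t := fun t _ => kj_hasDerivAt_G μ γ lam ρ h0 hρ.2 t
      rw [intervalIntegral.integral_eq_sub_of_hasDerivAt hF hint]
      have hper : Real.pi - μ - lam = (-Real.pi - μ - lam) + 2 * Real.pi := by ring
      rw [hper, Real.sin_add_two_pi, Real.cos_add_two_pi]
      ring_nf
      field_simp
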